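/- Let 1 < d₁ < 2 < d₂ and let d₁' = d₁/(d₁−1). Consider the integral operator T f(x) = ∫₁^∞ K(x,y) f(y) y^{d₁−1} dy with kernel K(x,y) = x^{1−d₂} y^{−1} for 1 ≤ x ≤ y and K(x,y) = x^{−d₂} for x > y ≥ 1. Then for every p with 1 < p < d₁' there exists a constant C > 0 such that ‖Tf‖_{L^p([1,∞), μ_{d₂})} ≤ C ‖f‖_{L^p([1,∞), μ_{d₁})} for all f ∈ L^p([1,∞), μ_{d₁}). -/

import Mathlib

open MeasureTheory Set

open scoped ENNReal NNReal

/-- The measure on `[1,∞)` with density `r ^ (n-1)` with respect to Lebesgue measure. -/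
noncomputable def mu (n : ℝ) : Measure ℝ :=
  (volume.restrict (Ici (1 : ℝ))).withDensity fun r => ENNReal.ofReal (r ^ (n - 1))


lemma lint_Ioi_aux {t c : ℝ} (ht : 0 < t) (hc : c < -1) :
    ∫⁻ y in Ioi t, ENNReal.ofReal (y ^ c) = ENNReal.ofReal (t ^ (c + 1) / (-(c + 1))) := by
  rw [← ofReal_integral_eq_lintegral_ofReal (integrableOn_Ioi_rpow_of_lt hc ht) ?_]
  · rw [integral_Ioi_rpow_of_lt hc ht, div_neg, neg_div]
  · filter_upwards [ae_restrict_mem measurableSet_Ioi] with y hy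
    exact Real.rpow_nonneg (le_of_lt (ht.trans hy)) c

lemma lint_Icc_aux {t c : ℝ} (ht : 1 ≤ t) (hc : -1 < c) :
    ∫⁻ y in Icc 1 t, ENNReal.ofReal (y ^ c) ≤ ENNReal.ofReal (t ^ (c + 1) / (c + 1)) := by
  have h1 : (0:ℝ) < c + 1 := by linarith
  rw [setLIntegral_congr (Ioc_ae_eq_Icc (α := ℝ) (a := 1) (b := t)).symm]
  have hint : IntegrableOn (fun y : ℝ => y ^ c) (Ioc 1 t) volume := by
    have := (intervalIntegral.intervalIntegrable_rpow' hc (a := (1:ℝ)) (b := t))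
    rw [intervalIntegrable_iff_integrableOn_Ioc_of_le ht] at this
    exact this
  rw [← ofReal_integral_eq_lintegral_ofReal hint ?_]
  · apply ENNReal.ofReal_le_ofReal
    rw [← intervalIntegral.integral_of_le ht, integral_rpow (Or.inl hc), Real.one_rpow]
    apply div_le_div_of_nonneg_right ?_ h1.le |>.trans_eq rfl
    linarith [Real.rpow_nonneg (le_trans zero_le_one ht) (c+1)]
  · filter_upwards [ae_restrict_mem measurableSet_Ioc] with y hy
    exact Real.rpow_nonneg (by linarith [hy.1]) c

lemma ofReal_mul3 {a b c : ℝ} (ha : 0 ≤ a) (hb : 0 ≤ b) :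
    ENNReal.ofReal a * ENNReal.ofReal b * ENNReal.ofReal c = ENNReal.ofReal (a * b * c) := by
  rw [← ENNReal.ofReal_mul ha, ← ENNReal.ofReal_mul (mul_nonneg ha hb)]

/-- Schur test, first row: integral in `y`. -/
lemma schurA {d₁ d₂ β : ℝ} (hd₁ : 1 < d₁) (hdd : d₁ < d₂)
    (hβ1 : d₁ - 1 < β) (hβ2 : β < d₁) {x : ℝ} (hx : 1 ≤ x) :
    ∫⁻ y in Ici (1:ℝ),
        ENNReal.ofReal (if x ≤ y then x ^ (1 - d₂) * y ^ (-1 : ℝ) else x ^ (-d₂)) *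
          ENNReal.ofReal (y ^ (-β)) * ENNReal.ofReal (y ^ (d₁ - 1)) ≤
      ENNReal.ofReal (1 / (d₁ - β) + 1 / (β - (d₁ - 1))) * ENNReal.ofReal (x ^ (-β)) := by
  have hx0 : (0:ℝ) < x := lt_of_lt_of_le zero_lt_one hx
  have hsplit : Ici (1:ℝ) = Ico 1 x ∪ Ici x := (Ico_union_Ici_eq_Ici hx).symm
  have hdisj : Disjoint (Ico (1:ℝ) x) (Ici x) :=
    disjoint_left.mpr fun y hy1 hy2 => absurd hy2 (not_le.mpr hy1.2)
  rw [hsplit, lintegral_union measurableSet_Ici hdisj]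
  have e1 : ∫⁻ y in Ico (1:ℝ) x,
      ENNReal.ofReal (if x ≤ y then x ^ (1 - d₂) * y ^ (-1 : ℝ) else x ^ (-d₂)) *
        ENNReal.ofReal (y ^ (-β)) * ENNReal.ofReal (y ^ (d₁ - 1)) ≤
      ENNReal.ofReal (1 / (d₁ - β)) * ENNReal.ofReal (x ^ (-β)) := by
    have step : ∀ y ∈ Ico (1:ℝ) x,
        ENNReal.ofReal (if x ≤ y then x ^ (1 - d₂) * y ^ (-1 : ℝ) else x ^ (-d₂)) *
          ENNReal.ofReal (y ^ (-β)) * ENNReal.ofReal (y ^ (d₁ - 1)) =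
        ENNReal.ofReal (x ^ (-d₂)) * ENNReal.ofReal (y ^ (d₁ - 1 - β)) := by
      intro y hy
      have hy0 : (0:ℝ) < y := lt_of_lt_of_le zero_lt_one hy.1
      rw [if_neg (not_le.mpr hy.2), ofReal_mul3 (Real.rpow_nonneg hx0.le _) (Real.rpow_nonneg hy0.le _),
        ← ENNReal.ofReal_mul (Real.rpow_nonneg hx0.le _)]
      congr 1
      rw [show d₁ - 1 - β = -β + (d₁ - 1) by ring, Real.rpow_add hy0]
      ring
    calc _ = ∫⁻ y in Ico (1:ℝ) x, ENNReal.ofReal (x ^ (-d₂)) * ENNReal.ofReal (y ^ (d₁ - 1 - β)) :=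
            setLIntegral_congr_fun measurableSet_Ico step
      _ = ENNReal.ofReal (x ^ (-d₂)) * ∫⁻ y in Ico (1:ℝ) x, ENNReal.ofReal (y ^ (d₁ - 1 - β)) := by
            rw [lintegral_const_mul' _ _ ENNReal.ofReal_ne_top]
      _ ≤ ENNReal.ofReal (x ^ (-d₂)) * ENNReal.ofReal (x ^ (d₁ - β) / (d₁ - β)) := by
            gcongr
            refine le_trans (lintegral_mono_set Ico_subset_Icc_self) ?_
            have h := lint_Icc_aux (t := x) (c := d₁ - 1 - β) hx (by linarith)
            rwa [show d₁ - 1 - β + 1 = d₁ - β by ring] at h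
      _ ≤ ENNReal.ofReal (1 / (d₁ - β)) * ENNReal.ofReal (x ^ (-β)) := by
            rw [← ENNReal.ofReal_mul (Real.rpow_nonneg hx0.le _),
              ← ENNReal.ofReal_mul (one_div_nonneg.mpr (by linarith))]
            apply ENNReal.ofReal_le_ofReal
            rw [div_eq_mul_inv, ← mul_assoc, ← Real.rpow_add hx0, one_div,
              mul_comm ((d₁ - β)⁻¹) (x ^ (-β))]
            gcongr
            linarith
  have e2 : ∫⁻ y in Ici x,
      ENNReal.ofReal (if x ≤ y then x ^ (1 - d₂) * y ^ (-1 : ℝ) else x ^ (-d₂)) *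
        ENNReal.ofReal (y ^ (-β)) * ENNReal.ofReal (y ^ (d₁ - 1)) ≤
      ENNReal.ofReal (1 / (β - (d₁ - 1))) * ENNReal.ofReal (x ^ (-β)) := by
    have step : ∀ y ∈ Ici x,
        ENNReal.ofReal (if x ≤ y then x ^ (1 - d₂) * y ^ (-1 : ℝ) else x ^ (-d₂)) *
          ENNReal.ofReal (y ^ (-β)) * ENNReal.ofReal (y ^ (d₁ - 1)) =
        ENNReal.ofReal (x ^ (1 - d₂)) * ENNReal.ofReal (y ^ (d₁ - 2 - β)) := by
      intro y hy
      have hxy : x ≤ y := hy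
      have hy0 : (0:ℝ) < y := lt_of_lt_of_le hx0 hxy
      rw [if_pos hxy,
        ofReal_mul3 (mul_nonneg (Real.rpow_nonneg hx0.le _) (Real.rpow_nonneg hy0.le _))
          (Real.rpow_nonneg hy0.le _),
        ← ENNReal.ofReal_mul (Real.rpow_nonneg hx0.le _)]
      congr 1
      rw [show d₁ - 2 - β = (-1) + -β + (d₁ - 1) by ring, Real.rpow_add hy0, Real.rpow_add hy0]
      ring
    calc _ = ∫⁻ y in Ici x, ENNReal.ofReal (x ^ (1 - d₂)) * ENNReal.ofReal (y ^ (d₁ - 2 - β)) :=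
            setLIntegral_congr_fun measurableSet_Ici step
      _ = ENNReal.ofReal (x ^ (1 - d₂)) * ∫⁻ y in Ici x, ENNReal.ofReal (y ^ (d₁ - 2 - β)) := by
            rw [lintegral_const_mul' _ _ ENNReal.ofReal_ne_top]
      _ ≤ ENNReal.ofReal (1 / (β - (d₁ - 1))) * ENNReal.ofReal (x ^ (-β)) := by
            rw [setLIntegral_congr (Ioi_ae_eq_Ici (a := x)).symm,
              lint_Ioi_aux hx0 (by linarith)]
            rw [← ENNReal.ofReal_mul (Real.rpow_nonneg hx0.le _),
              ← ENNReal.ofReal_mul (one_div_nonneg.mpr (by linarith))]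
            apply ENNReal.ofReal_le_ofReal
            rw [div_eq_mul_inv, ← mul_assoc, ← Real.rpow_add hx0, one_div,
              show -(d₁ - 2 - β + 1) = β - (d₁ - 1) by ring,
              mul_comm ((β - (d₁ - 1))⁻¹) (x ^ (-β))]
            gcongr
            linarith
  calc _ ≤ ENNReal.ofReal (1 / (d₁ - β)) * ENNReal.ofReal (x ^ (-β)) +
        ENNReal.ofReal (1 / (β - (d₁ - 1))) * ENNReal.ofReal (x ^ (-β)) := add_le_add e1 e2
    _ = _ := by
        rw [← add_mul, ← ENNReal.ofReal_add (one_div_nonneg.mpr (by linarith))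
          (one_div_nonneg.mpr (by linarith))]


/-- Schur test, second row: integral in `x`. -/
lemma schurB {d₂ α : ℝ} (hα1 : 0 < α) (hα2 : α < 1) {y : ℝ} (hy : 1 ≤ y) :
    ∫⁻ x in Ici (1:ℝ),
        ENNReal.ofReal (if x ≤ y then x ^ (1 - d₂) * y ^ (-1 : ℝ) else x ^ (-d₂)) *
          ENNReal.ofReal (x ^ (-α)) * ENNReal.ofReal (x ^ (d₂ - 1)) ≤
      ENNReal.ofReal (1 / (1 - α) + 1 / α) * ENNReal.ofReal (y ^ (-α)) := by
  have hy0 : (0:ℝ) < y := lt_of_lt_of_le zero_lt_one hy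
  have hsplit : Ici (1:ℝ) = Icc 1 y ∪ Ioi y := (Icc_union_Ioi_eq_Ici hy).symm
  have hdisj : Disjoint (Icc (1:ℝ) y) (Ioi y) :=
    disjoint_left.mpr fun x hx1 hx2 => absurd hx1.2 (not_le.mpr hx2)
  rw [hsplit, lintegral_union measurableSet_Ioi hdisj]
  have e1 : ∫⁻ x in Icc (1:ℝ) y,
      ENNReal.ofReal (if x ≤ y then x ^ (1 - d₂) * y ^ (-1 : ℝ) else x ^ (-d₂)) *
        ENNReal.ofReal (x ^ (-α)) * ENNReal.ofReal (x ^ (d₂ - 1)) ≤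
      ENNReal.ofReal (1 / (1 - α)) * ENNReal.ofReal (y ^ (-α)) := by
    have step : ∀ x ∈ Icc (1:ℝ) y,
        ENNReal.ofReal (if x ≤ y then x ^ (1 - d₂) * y ^ (-1 : ℝ) else x ^ (-d₂)) *
          ENNReal.ofReal (x ^ (-α)) * ENNReal.ofReal (x ^ (d₂ - 1)) =
        ENNReal.ofReal (y ^ (-1 : ℝ)) * ENNReal.ofReal (x ^ (-α)) := by
      intro x hx
      have hx0 : (0:ℝ) < x := lt_of_lt_of_le zero_lt_one hx.1
      rw [if_pos hx.2,
        ofReal_mul3 (mul_nonneg (Real.rpow_nonneg hx0.le _) (Real.rpow_nonneg hy0.le _))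
          (Real.rpow_nonneg hx0.le _),
        ← ENNReal.ofReal_mul (Real.rpow_nonneg hy0.le _)]
      congr 1
      have hxx : x ^ (1 - d₂) * x ^ (d₂ - 1) = 1 := by
        rw [← Real.rpow_add hx0, show (1 - d₂) + (d₂ - 1) = 0 by ring, Real.rpow_zero]
      linear_combination (y ^ (-1:ℝ) * x ^ (-α)) * hxx
    calc _ = ∫⁻ x in Icc (1:ℝ) y, ENNReal.ofReal (y ^ (-1:ℝ)) * ENNReal.ofReal (x ^ (-α)) :=
            setLIntegral_congr_fun measurableSet_Icc step
      _ = ENNReal.ofReal (y ^ (-1:ℝ)) * ∫⁻ x in Icc (1:ℝ) y, ENNReal.ofReal (x ^ (-α)) := by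
            rw [lintegral_const_mul' _ _ ENNReal.ofReal_ne_top]
      _ ≤ ENNReal.ofReal (y ^ (-1:ℝ)) * ENNReal.ofReal (y ^ (1 - α) / (1 - α)) := by
            gcongr
            have h := lint_Icc_aux (t := y) (c := -α) hy (by linarith)
            rwa [show -α + 1 = 1 - α by ring] at h
      _ ≤ ENNReal.ofReal (1 / (1 - α)) * ENNReal.ofReal (y ^ (-α)) := by
            rw [← ENNReal.ofReal_mul (Real.rpow_nonneg hy0.le _),
              ← ENNReal.ofReal_mul (one_div_nonneg.mpr (by linarith))]
            apply ENNReal.ofReal_le_ofReal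
            rw [div_eq_mul_inv, ← mul_assoc, ← Real.rpow_add hy0, one_div,
              mul_comm ((1 - α)⁻¹) (y ^ (-α))]
            gcongr
            linarith
  have e2 : ∫⁻ x in Ioi y,
      ENNReal.ofReal (if x ≤ y then x ^ (1 - d₂) * y ^ (-1 : ℝ) else x ^ (-d₂)) *
        ENNReal.ofReal (x ^ (-α)) * ENNReal.ofReal (x ^ (d₂ - 1)) ≤
      ENNReal.ofReal (1 / α) * ENNReal.ofReal (y ^ (-α)) := by
    have step : ∀ x ∈ Ioi y,
        ENNReal.ofReal (if x ≤ y then x ^ (1 - d₂) * y ^ (-1 : ℝ) else x ^ (-d₂)) *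
          ENNReal.ofReal (x ^ (-α)) * ENNReal.ofReal (x ^ (d₂ - 1)) =
        ENNReal.ofReal (x ^ (-1 - α)) := by
      intro x hx
      have hx0 : (0:ℝ) < x := lt_trans hy0 hx
      rw [if_neg (not_le.mpr hx),
        ofReal_mul3 (Real.rpow_nonneg hx0.le _) (Real.rpow_nonneg hx0.le _)]
      congr 1
      rw [show (-1 - α) = -d₂ + -α + (d₂ - 1) by ring, Real.rpow_add hx0, Real.rpow_add hx0]
    calc _ = ∫⁻ x in Ioi y, ENNReal.ofReal (x ^ (-1 - α)) :=
            setLIntegral_congr_fun measurableSet_Ioi step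
      _ ≤ ENNReal.ofReal (1 / α) * ENNReal.ofReal (y ^ (-α)) := by
            rw [lint_Ioi_aux hy0 (by linarith)]
            rw [← ENNReal.ofReal_mul (one_div_nonneg.mpr (by linarith))]
            apply ENNReal.ofReal_le_ofReal
            rw [show -1 - α + 1 = -α by ring, show -(-α) = α by ring, div_eq_mul_inv, one_div,
              mul_comm (α⁻¹) (y ^ (-α))]
  calc _ ≤ ENNReal.ofReal (1 / (1 - α)) * ENNReal.ofReal (y ^ (-α)) +
        ENNReal.ofReal (1 / α) * ENNReal.ofReal (y ^ (-α)) := add_le_add e1 e2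
    _ = _ := by
        rw [← add_mul, ← ENNReal.ofReal_add (one_div_nonneg.mpr (by linarith))
          (one_div_nonneg.mpr (by linarith))]


lemma main_est (d₁ d₂ p p' a : ℝ) (hd₁ : 1 < d₁) (hdd : d₁ < d₂)
    (hpq : p.HolderConjugate p')
    (hβ1 : d₁ - 1 < a * p') (hβ2 : a * p' < d₁) (hα1 : 0 < a * p) (hα2 : a * p < 1)
    (f : ℝ → ℝ) (hf : Measurable f) :
    ∫⁻ x, (‖(∫ y in Ici (1:ℝ),
        (if x ≤ y then x ^ (1 - d₂) * y ^ (-1 : ℝ) else x ^ (-d₂)) * f y * y ^ (d₁ - 1))‖₊ : ℝ≥0∞) ^ p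
        ∂(mu d₂) ≤
      ENNReal.ofReal ((1 / (d₁ - a * p') + 1 / (a * p' - (d₁ - 1))) ^ (p - 1) *
          (1 / (1 - a * p) + 1 / (a * p))) *
        ∫⁻ y, (‖f y‖₊ : ℝ≥0∞) ^ p ∂(mu d₁) := by
  have hp1 : 1 < p := hpq.lt
  have hp0 : 0 < p := hpq.pos
  have hp'0 : 0 < p' := hpq.symm.pos
  set β := a * p' with hβdef
  set α := a * p with hαdef
  set A := 1 / (d₁ - β) + 1 / (β - (d₁ - 1)) with hAdef
  set B := 1 / (1 - α) + 1 / α with hBdef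
  have hA0 : 0 < A := add_pos (one_div_pos.mpr (by linarith)) (one_div_pos.mpr (by linarith))
  have hB0 : 0 < B := add_pos (one_div_pos.mpr (by linarith)) (one_div_pos.mpr hα1)
  have ha0 : 0 < a := by nlinarith
  haveI hsf1 : SFinite (mu d₁) := by unfold mu; infer_instance
  haveI hsf2 : SFinite (mu d₂) := by unfold mu; infer_instance
  set K : ℝ → ℝ → ℝ≥0∞ := fun x y =>
    ENNReal.ofReal (if x ≤ y then x ^ (1 - d₂) * y ^ (-1 : ℝ) else x ^ (-d₂)) with hKdef
  -- measurability facts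
  have hKm : Measurable fun z : ℝ × ℝ => K z.1 z.2 := by
    apply ENNReal.measurable_ofReal.comp
    exact Measurable.ite (measurableSet_le measurable_fst measurable_snd)
      ((measurable_fst.pow measurable_const).mul (measurable_snd.pow measurable_const))
      (measurable_fst.pow measurable_const)
  have hKmx : ∀ x, Measurable fun y => K x y := fun x => hKm.comp (measurable_const.prodMk measurable_id)
  have hKmy : ∀ y, Measurable fun x => K x y := fun y => hKm.comp (measurable_id.prodMk measurable_const)
  have hrm : ∀ c : ℝ, Measurable fun t : ℝ => ENNReal.ofReal (t ^ c) :=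
    fun c => ENNReal.measurable_ofReal.comp (measurable_id.pow measurable_const)
  -- withDensity unfolding
  have hwd : ∀ (n : ℝ) (g : ℝ → ℝ≥0∞),
      ∫⁻ t, g t ∂(mu n) = ∫⁻ t in Ici 1, ENNReal.ofReal (t ^ (n - 1)) * g t := by
    intro n g
    rw [mu, lintegral_withDensity_eq_lintegral_mul_non_measurable _ (hrm _)
      (ae_of_all _ fun x => ENNReal.ofReal_lt_top)]
    rfl
  -- a.e. membership
  have hae : ∀ n : ℝ, ∀ᵐ t ∂(mu n), 1 ≤ t := by
    intro n
    exact (withDensity_absolutelyContinuous _ _).ae_le (ae_restrict_mem measurableSet_Ici)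
  -- kernel nonneg
  have hK0 : ∀ x y : ℝ, 0 ≤ x → 0 ≤ y →
      (0:ℝ) ≤ (if x ≤ y then x ^ (1 - d₂) * y ^ (-1 : ℝ) else x ^ (-d₂)) := by
    intro x y hx hy
    split
    · exact mul_nonneg (Real.rpow_nonneg hx _) (Real.rpow_nonneg hy _)
    · exact Real.rpow_nonneg hx _
  set J : ℝ → ℝ≥0∞ := fun x =>
    ∫⁻ y, K x y * (‖f y‖₊ : ℝ≥0∞) ^ p * ENNReal.ofReal (y ^ α) ∂(mu d₁) with hJdef
  have h1p' : 1 / p' * p = p - 1 := by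
    have h := hpq.inv_add_inv_eq_one
    have h2 : 1 / p' = 1 - 1 / p := by rw [one_div, one_div]; linarith
    rw [h2, sub_mul, one_mul, one_div, inv_mul_cancel₀ hp0.ne']
  have hpoint : ∀ x : ℝ, 1 ≤ x →
      (‖(∫ y in Ici (1:ℝ),
          (if x ≤ y then x ^ (1 - d₂) * y ^ (-1 : ℝ) else x ^ (-d₂)) * f y * y ^ (d₁ - 1))‖₊ : ℝ≥0∞) ^ p ≤
      ENNReal.ofReal (A ^ (p - 1)) * ENNReal.ofReal (x ^ (-α)) * J x := by
    intro x hx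
    have hx0 : (0:ℝ) < x := by linarith
    have s1 : (‖(∫ y in Ici (1:ℝ),
        (if x ≤ y then x ^ (1 - d₂) * y ^ (-1 : ℝ) else x ^ (-d₂)) * f y * y ^ (d₁ - 1))‖₊ : ℝ≥0∞)
        ≤ ∫⁻ y, K x y * (‖f y‖₊ : ℝ≥0∞) ∂(mu d₁) := by
      refine le_trans (enorm_integral_le_lintegral_enorm _) ?_
      rw [hwd d₁]
      refine le_of_eq (setLIntegral_congr_fun measurableSet_Ici ?_)
      intro y hy
      have hy0 : (0:ℝ) < y := lt_of_lt_of_le zero_lt_one hy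
      beta_reduce
      rw [enorm_mul, enorm_mul,
        Real.enorm_eq_ofReal (hK0 x y hx0.le hy0.le),
        Real.enorm_eq_ofReal (Real.rpow_nonneg hy0.le _), enorm_eq_nnnorm]
      simp only [hKdef]
      ring
    have s2 : ∫⁻ y, K x y * (‖f y‖₊ : ℝ≥0∞) ∂(mu d₁) ≤
        (ENNReal.ofReal A * ENNReal.ofReal (x ^ (-β))) ^ (1 / p') * J x ^ (1 / p) := by
      set F : ℝ → ℝ≥0∞ := fun y => K x y ^ (1 / p') * ENNReal.ofReal (y ^ (-a)) with hFdef
      set G : ℝ → ℝ≥0∞ := fun y =>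
        K x y ^ (1 / p) * (‖f y‖₊ : ℝ≥0∞) * ENNReal.ofReal (y ^ a) with hGdef
      have hFm : Measurable F := ((hKmx x).pow measurable_const).mul (hrm _)
      have hGm : Measurable G :=
        (((hKmx x).pow measurable_const).mul hf.enorm).mul (hrm _)
      have hIF : ∫⁻ y, F y ^ p' ∂(mu d₁) ≤ ENNReal.ofReal A * ENNReal.ofReal (x ^ (-β)) := by
        have hcg : ∫⁻ y, F y ^ p' ∂(mu d₁) =
            ∫⁻ y, K x y * ENNReal.ofReal (y ^ (-β)) ∂(mu d₁) := by
          apply lintegral_congr_ae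
          filter_upwards [hae d₁] with y hy
          have hy0 : (0:ℝ) < y := by linarith
          simp only [hFdef]
          rw [ENNReal.mul_rpow_of_nonneg _ _ hp'0.le, ← ENNReal.rpow_mul, one_div,
            inv_mul_cancel₀ hp'0.ne', ENNReal.rpow_one,
            ENNReal.ofReal_rpow_of_nonneg (Real.rpow_nonneg hy0.le _) hp'0.le,
            ← Real.rpow_mul hy0.le,
            show -a * p' = -β by rw [hβdef]; ring]
        rw [hcg, hwd d₁]
        refine le_trans (le_of_eq (setLIntegral_congr_fun measurableSet_Ici ?_))
          (schurA hd₁ hdd hβ1 hβ2 hx)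
        intro y hy
        simp only [hKdef]
        ring
      have hIG : ∫⁻ y, G y ^ p ∂(mu d₁) = J x := by
        rw [hJdef]
        apply lintegral_congr_ae
        filter_upwards [hae d₁] with y hy
        have hy0 : (0:ℝ) < y := by linarith
        simp only [hGdef]
        rw [ENNReal.mul_rpow_of_nonneg _ _ hp0.le, ENNReal.mul_rpow_of_nonneg _ _ hp0.le,
          ← ENNReal.rpow_mul, one_div, inv_mul_cancel₀ hp0.ne', ENNReal.rpow_one,
          ENNReal.ofReal_rpow_of_nonneg (Real.rpow_nonneg hy0.le _) hp0.le,
          ← Real.rpow_mul hy0.le,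
          show a * p = α from hαdef.symm ▸ rfl]
      calc ∫⁻ y, K x y * (‖f y‖₊ : ℝ≥0∞) ∂(mu d₁) = ∫⁻ y, (F * G) y ∂(mu d₁) := by
            apply lintegral_congr_ae
            filter_upwards [hae d₁] with y hy
            have hy0 : (0:ℝ) < y := by linarith
            simp only [Pi.mul_apply, hFdef, hGdef]
            rw [show K x y ^ (1 / p') * ENNReal.ofReal (y ^ (-a)) *
                (K x y ^ (1 / p) * (‖f y‖₊ : ℝ≥0∞) * ENNReal.ofReal (y ^ a)) =
                K x y ^ (1 / p') * K x y ^ (1 / p) * (‖f y‖₊ : ℝ≥0∞) *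
                (ENNReal.ofReal (y ^ (-a)) * ENNReal.ofReal (y ^ a)) by ring,
              ← ENNReal.rpow_add_of_nonneg _ _ (by positivity) (by positivity),
              show 1 / p' + 1 / p = 1 by
                rw [one_div, one_div]; exact hpq.symm.inv_add_inv_eq_one,
              ENNReal.rpow_one,
              ← ENNReal.ofReal_mul (Real.rpow_nonneg hy0.le _), ← Real.rpow_add hy0,
              show -a + a = 0 by ring, Real.rpow_zero, ENNReal.ofReal_one, mul_one]
        _ ≤ (∫⁻ y, F y ^ p' ∂(mu d₁)) ^ (1 / p') * (∫⁻ y, G y ^ p ∂(mu d₁)) ^ (1 / p) :=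
            ENNReal.lintegral_mul_le_Lp_mul_Lq (mu d₁) hpq.symm hFm.aemeasurable hGm.aemeasurable
        _ ≤ (ENNReal.ofReal A * ENNReal.ofReal (x ^ (-β))) ^ (1 / p') * J x ^ (1 / p) := by
            rw [hIG]
            exact mul_le_mul_left (ENNReal.rpow_le_rpow hIF (by positivity)) _
    calc (‖(∫ y in Ici (1:ℝ),
          (if x ≤ y then x ^ (1 - d₂) * y ^ (-1 : ℝ) else x ^ (-d₂)) * f y * y ^ (d₁ - 1))‖₊ : ℝ≥0∞) ^ p
        ≤ ((ENNReal.ofReal A * ENNReal.ofReal (x ^ (-β))) ^ (1 / p') * J x ^ (1 / p)) ^ p :=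
          ENNReal.rpow_le_rpow (s1.trans s2) hp0.le
      _ = ENNReal.ofReal (A ^ (p - 1)) * ENNReal.ofReal (x ^ (-α)) * J x := by
          rw [ENNReal.mul_rpow_of_nonneg _ _ hp0.le, ← ENNReal.rpow_mul, ← ENNReal.rpow_mul,
            h1p', show 1 / p * p = 1 by field_simp, ENNReal.rpow_one,
            ENNReal.mul_rpow_of_nonneg _ _ (by linarith : (0:ℝ) ≤ p - 1),
            ENNReal.ofReal_rpow_of_nonneg hA0.le (by linarith : (0:ℝ) ≤ p - 1),
            ENNReal.ofReal_rpow_of_nonneg (Real.rpow_nonneg hx0.le _) (by linarith : (0:ℝ) ≤ p - 1),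
            ← Real.rpow_mul hx0.le,
            show -β * (p - 1) = -α by
              rw [hβdef, hαdef]; linear_combination (-a) * hpq.sub_one_mul_conj]
  -- global integration
  calc ∫⁻ x, (‖(∫ y in Ici (1:ℝ),
        (if x ≤ y then x ^ (1 - d₂) * y ^ (-1 : ℝ) else x ^ (-d₂)) * f y * y ^ (d₁ - 1))‖₊ : ℝ≥0∞) ^ p
        ∂(mu d₂)
      ≤ ∫⁻ x, ENNReal.ofReal (A ^ (p - 1)) * ENNReal.ofReal (x ^ (-α)) * J x ∂(mu d₂) :=
        lintegral_mono_ae ((hae d₂).mono fun x hx => hpoint x hx)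
    _ = ENNReal.ofReal (A ^ (p - 1)) *
        ∫⁻ x, ∫⁻ y, ENNReal.ofReal (x ^ (-α)) *
          (K x y * (‖f y‖₊ : ℝ≥0∞) ^ p * ENNReal.ofReal (y ^ α)) ∂(mu d₁) ∂(mu d₂) := by
        rw [← lintegral_const_mul' _ _ ENNReal.ofReal_ne_top]
        apply lintegral_congr
        intro x
        rw [mul_assoc, ← lintegral_const_mul' _ _ ENNReal.ofReal_ne_top]
    _ = ENNReal.ofReal (A ^ (p - 1)) *
        ∫⁻ y, ∫⁻ x, ENNReal.ofReal (x ^ (-α)) *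
          (K x y * (‖f y‖₊ : ℝ≥0∞) ^ p * ENNReal.ofReal (y ^ α)) ∂(mu d₂) ∂(mu d₁) := by
        congr 1
        apply lintegral_lintegral_swap
        apply Measurable.aemeasurable
        exact ((hrm (-α)).comp measurable_fst).mul
          ((hKm.mul (((hf.comp measurable_snd).enorm).pow measurable_const)).mul
            ((hrm α).comp measurable_snd))
    _ ≤ ENNReal.ofReal (A ^ (p - 1)) *
        ∫⁻ y, (‖f y‖₊ : ℝ≥0∞) ^ p * ENNReal.ofReal (y ^ α) *
          (ENNReal.ofReal B * ENNReal.ofReal (y ^ (-α))) ∂(mu d₁) := by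
        refine mul_le_mul_right (lintegral_mono_ae ?_) _
        filter_upwards [hae d₁] with y hy
        have hy0 : (0:ℝ) < y := by linarith
        have hconst : (‖f y‖₊ : ℝ≥0∞) ^ p * ENNReal.ofReal (y ^ α) ≠ ⊤ :=
          ENNReal.mul_ne_top (ENNReal.rpow_ne_top_of_nonneg hp0.le ENNReal.coe_ne_top)
            ENNReal.ofReal_ne_top
        calc ∫⁻ x, ENNReal.ofReal (x ^ (-α)) *
              (K x y * (‖f y‖₊ : ℝ≥0∞) ^ p * ENNReal.ofReal (y ^ α)) ∂(mu d₂)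
            = ((‖f y‖₊ : ℝ≥0∞) ^ p * ENNReal.ofReal (y ^ α)) *
              ∫⁻ x, K x y * ENNReal.ofReal (x ^ (-α)) ∂(mu d₂) := by
              rw [← lintegral_const_mul' _ _ hconst]
              apply lintegral_congr
              intro x
              ring
          _ ≤ ((‖f y‖₊ : ℝ≥0∞) ^ p * ENNReal.ofReal (y ^ α)) *
              (ENNReal.ofReal B * ENNReal.ofReal (y ^ (-α))) := by
              refine mul_le_mul_right ?_ _
              rw [hwd d₂]
              have hb : ∫⁻ x in Ici (1:ℝ), ENNReal.ofReal (x ^ (d₂ - 1)) *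
                    (K x y * ENNReal.ofReal (x ^ (-α))) =
                  ∫⁻ x in Ici (1:ℝ),
                    ENNReal.ofReal (if x ≤ y then x ^ (1 - d₂) * y ^ (-1 : ℝ) else x ^ (-d₂)) *
                      ENNReal.ofReal (x ^ (-α)) * ENNReal.ofReal (x ^ (d₂ - 1)) := by
                refine setLIntegral_congr_fun measurableSet_Ici (fun x hx' => ?_)
                simp only [hKdef]
                ring
              rw [hb]
              exact schurB hα1 hα2 hy
    _ = ENNReal.ofReal (A ^ (p - 1)) *
        (ENNReal.ofReal B * ∫⁻ y, (‖f y‖₊ : ℝ≥0∞) ^ p ∂(mu d₁)) := by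
        congr 1
        rw [← lintegral_const_mul' _ _ ENNReal.ofReal_ne_top]
        apply lintegral_congr_ae
        filter_upwards [hae d₁] with y hy
        have hy0 : (0:ℝ) < y := by linarith
        calc (‖f y‖₊ : ℝ≥0∞) ^ p * ENNReal.ofReal (y ^ α) *
              (ENNReal.ofReal B * ENNReal.ofReal (y ^ (-α)))
            = ENNReal.ofReal B * (‖f y‖₊ : ℝ≥0∞) ^ p *
              (ENNReal.ofReal (y ^ α) * ENNReal.ofReal (y ^ (-α))) := by ring
          _ = ENNReal.ofReal B * (‖f y‖₊ : ℝ≥0∞) ^ p := by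
              rw [← ENNReal.ofReal_mul (Real.rpow_nonneg hy0.le _), ← Real.rpow_add hy0,
                show α + -α = 0 by ring, Real.rpow_zero, ENNReal.ofReal_one, mul_one]
          _ = ENNReal.ofReal B * (‖f y‖₊ : ℝ≥0∞) ^ p := rfl
    _ = ENNReal.ofReal (A ^ (p - 1) * B) * ∫⁻ y, (‖f y‖₊ : ℝ≥0∞) ^ p ∂(mu d₁) := by
        rw [← mul_assoc, ← ENNReal.ofReal_mul (Real.rpow_nonneg hA0.le _)]

/-- For `1 < d₁ < 2 < d₂`, the integral operator with kernel
`K(x,y) = x^{1-d₂} y^{-1}` for `x ≤ y` and `x^{-d₂}` for `x > y`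
is bounded from `L^p([1,∞), μ_{d₁})` to `L^p([1,∞), μ_{d₂})` for
`1 < p < d₁' = d₁/(d₁-1)`. -/
theorem IV1_Lp_bounded
    (d₁ d₂ p : ℝ) (hd₁ : 1 < d₁) (hd₁2 : d₁ < 2) (hd₂ : 2 < d₂)
    (hp1 : 1 < p) (hp2 : p < d₁ / (d₁ - 1)) :
    ∃ C > 0, ∀ f : ℝ → ℝ, MemLp f (ENNReal.ofReal p) (mu d₁) →
      eLpNorm (fun x => ∫ y in Ici (1 : ℝ),
          (if x ≤ y then x ^ (1 - d₂) * y ^ (-1 : ℝ) else x ^ (-d₂)) * f y * y ^ (d₁ - 1))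
        (ENNReal.ofReal p) (mu d₂) ≤
      ENNReal.ofReal C * eLpNorm f (ENNReal.ofReal p) (mu d₁) := by
  have hp0 : (0:ℝ) < p := by linarith
  have hd10 : (0:ℝ) < d₁ - 1 := by linarith
  set p' : ℝ := p / (p - 1) with hp'def
  have hpq : p.HolderConjugate p' := Real.HolderConjugate.conjExponent hp1
  have hp'0 : 0 < p' := hpq.symm.pos
  have hlo : (d₁ - 1) / p' < 1 / p := by
    rw [div_lt_div_iff₀ hp'0 hp0]
    have hp2' : p * (d₁ - 1) < d₁ := (lt_div_iff₀ hd10).mp hp2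
    rw [one_mul, hp'def, lt_div_iff₀ (by linarith : (0:ℝ) < p - 1)]
    nlinarith
  have hlo2 : (d₁ - 1) / p' < d₁ / p' := by
    apply (div_lt_div_iff_of_pos_right hp'0).mpr
    linarith
  set m := min (1 / p) (d₁ / p') with hmdef
  have hlom : (d₁ - 1) / p' < m := lt_min hlo hlo2
  set a := ((d₁ - 1) / p' + m) / 2 with hadef
  have ha1 : (d₁ - 1) / p' < a := by rw [hadef]; linarith
  have ha2 : a < m := by rw [hadef]; linarith
  have hβ1 : d₁ - 1 < a * p' := by
    have := (div_lt_iff₀ hp'0).mp ha1; linarith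
  have hβ2 : a * p' < d₁ := by
    have h := lt_of_lt_of_le ha2 (min_le_right _ _)
    have := (lt_div_iff₀ hp'0).mp h; linarith
  have ha0 : 0 < a := lt_trans (div_pos hd10 hp'0) ha1
  have hα1 : 0 < a * p := mul_pos ha0 hp0
  have hα2 : a * p < 1 := by
    have h := lt_of_lt_of_le ha2 (min_le_left _ _)
    have := (lt_div_iff₀ hp0).mp h; linarith
  set A := 1 / (d₁ - a * p') + 1 / (a * p' - (d₁ - 1)) with hAdef
  set B := 1 / (1 - a * p) + 1 / (a * p) with hBdef
  have hA0 : 0 < A := add_pos (one_div_pos.mpr (by linarith)) (one_div_pos.mpr (by linarith))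
  have hB0 : 0 < B := add_pos (one_div_pos.mpr (by linarith)) (one_div_pos.mpr hα1)
  have hAB0 : 0 < A ^ (p - 1) * B := mul_pos (Real.rpow_pos_of_pos hA0 _) hB0
  refine ⟨(A ^ (p - 1) * B) ^ (1 / p), Real.rpow_pos_of_pos hAB0 _, ?_⟩
  intro f hf
  have hq0 : ENNReal.ofReal p ≠ 0 := by
    simp only [ne_eq, ENNReal.ofReal_eq_zero, not_le]; linarith
  have hqt : ENNReal.ofReal p ≠ ⊤ := ENNReal.ofReal_ne_top
  have hqr : (ENNReal.ofReal p).toReal = p := ENNReal.toReal_ofReal hp0.le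
  obtain ⟨hsm, -⟩ := hf
  set g := hsm.mk f with hgdef
  have hgm : Measurable g := hsm.stronglyMeasurable_mk.measurable
  have hfg : f =ᵐ[mu d₁] g := hsm.ae_eq_mk
  have hρm : Measurable fun y : ℝ => ENNReal.ofReal (y ^ (d₁ - 1)) :=
    ENNReal.measurable_ofReal.comp (measurable_id.pow measurable_const)
  have hac : volume.restrict (Ici (1:ℝ)) ≪ mu d₁ := by
    apply Measure.AbsolutelyContinuous.mk
    intro s hs h0
    rw [mu, withDensity_apply _ hs, Measure.restrict_restrict hs] at h0
    have hz0 := (lintegral_eq_zero_iff hρm).mp h0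
    have hfalse : ∀ᵐ y ∂(volume.restrict (s ∩ Ici (1:ℝ))), False := by
      filter_upwards [hz0, ae_restrict_mem (hs.inter measurableSet_Ici)] with y h1 h2
      have hy0 : (0:ℝ) < y := by have := h2.2; simp at this; linarith
      have hpos : (0:ℝ) < y ^ (d₁ - 1) := Real.rpow_pos_of_pos hy0 _
      have : y ^ (d₁ - 1) ≤ 0 := ENNReal.ofReal_eq_zero.mp h1
      linarith
    have hz : volume.restrict (s ∩ Ici (1:ℝ)) = 0 := by
      have h := ae_iff.mp hfalse
      simp only [not_false_eq_true, setOf_true] at h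
      exact Measure.measure_univ_eq_zero.mp h
    rw [Measure.restrict_apply hs]
    exact Measure.restrict_eq_zero.mp hz
  have hfg' : f =ᵐ[volume.restrict (Ici (1:ℝ))] g := hac.ae_eq hfg
  have hTfg : (fun x => ∫ y in Ici (1:ℝ),
        (if x ≤ y then x ^ (1 - d₂) * y ^ (-1 : ℝ) else x ^ (-d₂)) * f y * y ^ (d₁ - 1)) =
      (fun x => ∫ y in Ici (1:ℝ),
        (if x ≤ y then x ^ (1 - d₂) * y ^ (-1 : ℝ) else x ^ (-d₂)) * g y * y ^ (d₁ - 1)) := by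
    funext x
    apply integral_congr_ae
    filter_upwards [hfg'] with y hy
    rw [hy]
  rw [hTfg, eLpNorm_congr_ae hfg,
    eLpNorm_eq_lintegral_rpow_enorm_toReal hq0 hqt, eLpNorm_eq_lintegral_rpow_enorm_toReal hq0 hqt, hqr]
  have key := main_est d₁ d₂ p p' a hd₁ (by linarith : d₁ < d₂) hpq hβ1 hβ2 hα1 hα2 g hgm
  calc (∫⁻ x, (‖(∫ y in Ici (1:ℝ),
        (if x ≤ y then x ^ (1 - d₂) * y ^ (-1 : ℝ) else x ^ (-d₂)) * g y * y ^ (d₁ - 1))‖₊ : ℝ≥0∞) ^ p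
        ∂(mu d₂)) ^ (1 / p)
      ≤ (ENNReal.ofReal (A ^ (p - 1) * B) * ∫⁻ y, (‖g y‖₊ : ℝ≥0∞) ^ p ∂(mu d₁)) ^ (1 / p) :=
        ENNReal.rpow_le_rpow key (by positivity)
    _ = ENNReal.ofReal ((A ^ (p - 1) * B) ^ (1 / p)) *
        (∫⁻ y, (‖g y‖₊ : ℝ≥0∞) ^ p ∂(mu d₁)) ^ (1 / p) := by
        rw [ENNReal.mul_rpow_of_nonneg _ _ (by positivity),
          ENNReal.ofReal_rpow_of_nonneg hAB0.le (by positivity)]
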